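/- For any integer k > 1, the greatest common divisor of the set of numbers { C(2k+1, 2i) - C(2k+1, 2i-1) : 0 < i ≤ k } equals m(2k+1)·m(2k), where C denotes the binomial coefficient. -/

import Mathlib

-- cast version of Lucas step
lemma lucas_step (p : ℕ) [Fact p.Prime] (n m : ℕ) :
    ((n.choose m : ZMod p)) = ((n % p).choose (m % p) : ZMod p) * ((n / p).choose (m / p) : ZMod p) := by
  have h := Choose.choose_modEq_choose_mod_mul_choose_div (p := p) (n := n) (k := m)
  have h2 := (ZMod.intCast_eq_intCast_iff _ _ _).mpr h
  push_cast at h2 ⊢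
  exact h2

-- L1
lemma choose_pp_sub_one (p : ℕ) [hp : Fact p.Prime] (s : ℕ) :
    ∀ m, m ≤ p ^ s - 1 → (((p ^ s - 1).choose m : ℕ) : ZMod p) = (-1) ^ m := by
  intro m
  induction m with
  | zero => simp
  | succ m ih =>
    intro hm
    have hpos : 0 < p ^ s := pow_pos hp.out.pos s
    have hps : p ^ s - 1 + 1 = p ^ s := Nat.succ_pred_eq_of_pos hpos
    have hdvd : p ∣ (p ^ s).choose (m + 1) :=
      hp.out.dvd_choose_pow (Nat.succ_ne_zero m) (by omega)
    have hz : (((p ^ s).choose (m + 1) : ℕ) : ZMod p) = 0 :=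
      (ZMod.natCast_eq_zero_iff _ _).mpr hdvd
    have hpas : (p ^ s).choose (m+1) = (p^s - 1).choose m + (p^s - 1).choose (m+1) := by
      rw [← hps]; exact Nat.choose_succ_succ _ m
    have key : ((p^s - 1).choose m : ZMod p) + ((p^s -1).choose (m+1) : ZMod p) = 0 := by
      rw [← Nat.cast_add, ← hpas, hz]
    rw [ih (by omega)] at key
    have := eq_neg_of_add_eq_zero_right key
    rw [this, pow_succ]
    ring
-- Q lemma
lemma pow_of_all_choose_sign (p : ℕ) [hp : Fact p.Prime] :
    ∀ q : ℕ, (∀ v ≤ q, ((q.choose v : ℕ) : ZMod p) = (-1) ^ v) → ∃ t : ℕ, q + 1 = p ^ t := by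
  intro q
  induction q using Nat.strong_induction_on with
  | _ q IH =>
    intro H
    rcases Nat.eq_zero_or_pos q with rfl | hq0
    · exact ⟨0, by simp⟩
    by_cases hqp : q < p
    · -- q ≥ 1, q < p : q = p - 1
      have h1 := H 1 hq0
      rw [Nat.choose_one_right, pow_one] at h1
      have : ((q + 1 : ℕ) : ZMod p) = 0 := by push_cast [h1]; ring
      have hdvd : p ∣ q + 1 := (ZMod.natCast_eq_zero_iff _ _).mp this
      have : q + 1 = p := le_antisymm (by omega) (Nat.le_of_dvd (by omega) hdvd)
      exact ⟨1, by simpa using this⟩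
    · push_neg at hqp
      have hp1 : 1 < p := hp.out.one_lt
      have hqd : p * (q / p) + q % p = q := Nat.div_add_mod q p
      have hrp : q % p < p := Nat.mod_lt _ (by omega)
      -- r = p - 1
      have hrval : q % p = p - 1 := by
        by_contra hne
        have hrlt : q % p < p - 1 := by omega
        have h2 := H (p - 1) (by omega)
        rw [lucas_step p q (p - 1)] at h2
        rw [Nat.mod_eq_of_lt (show p - 1 < p by omega),
          Nat.div_eq_of_lt (show p - 1 < p by omega)] at h2
        rw [Nat.choose_eq_zero_of_lt (show q % p < p - 1 by omega)] at h2
        simp only [Nat.cast_zero, zero_mul] at h2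
        have hu : IsUnit ((-1 : ZMod p) ^ (p - 1)) := (IsUnit.neg isUnit_one).pow _
        rw [← h2] at hu
        simp at hu
      -- condition descends to q'
      have H' : ∀ w ≤ q / p, (((q / p).choose w : ℕ) : ZMod p) = (-1) ^ w := by
        intro w hw
        have hv : p * w ≤ q := le_trans (Nat.mul_le_mul_left p hw)
          (by omega : p * (q / p) ≤ q)
        have h3 := H (p * w) hv
        rw [lucas_step p q (p * w)] at h3
        rw [Nat.mul_mod_right, Nat.mul_div_cancel_left _ (by omega : 0 < p)] at h3
        simp only [Nat.choose_zero_right, Nat.cast_one, one_mul] at h3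
        rw [h3, pow_mul, neg_one_pow_char (ZMod p)]
      have hq'lt : q / p < q := Nat.div_lt_self (by omega) hp1
      obtain ⟨t, ht⟩ := IH (q / p) hq'lt H'
      refine ⟨t + 1, ?_⟩
      have hmul : p * (q / p + 1) = p * (q / p) + p := by ring
      have : q + 1 = p * (q / p + 1) := by omega
      rw [this, ht, pow_succ']

-- L3 : odd prime dividing all C(2k,2i)-1 forces 2k+1 = p^s
lemma odd_prime_cond (p k : ℕ) (hp : p.Prime) (hodd : p ≠ 2) (hk : 2 ≤ k)
    (H : ∀ i, 1 ≤ i → i ≤ k → (((2 * k).choose (2 * i) : ℕ) : ZMod p) = 1) :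
    ∃ s : ℕ, 0 < s ∧ 2 * k + 1 = p ^ s := by
  haveI : Fact p.Prime := ⟨hp⟩
  have hp1 : 1 < p := hp.one_lt
  have hp3 : 3 ≤ p := by
    have := hp.two_le
    rcases Nat.lt_or_ge p 3 with h | h
    · interval_cases p <;> simp_all
    · exact h
  have hp2 : p % 2 = 1 := (Nat.Prime.mod_two_eq_one_iff_ne_two hp).mpr hodd
  have hC2 : 2 * ((2 * k).choose 2) = 2 * k * (2 * k - 1) := by
    rw [Nat.choose_two_right, Nat.mul_div_cancel']
    exact Dvd.dvd.mul_right ⟨k, rfl⟩ _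
  by_cases hbig : 2 * k < p
  · -- p > 2k : use i = 1
    have h1 := H 1 (le_refl 1) (by omega)
    have hz : (((2 * k + 1) * (k - 1) : ℕ) : ZMod p) = 0 := by
      have hcast : ((2 * ((2 * k).choose 2) : ℕ) : ZMod p)
          = ((2 * k * (2 * k - 1) : ℕ) : ZMod p) := by rw [hC2]
      have e1 : ((2 * k - 1 : ℕ) : ZMod p) = 2 * (k : ZMod p) - 1 := by
        have h' : (2 * k - 1) + 1 = 2 * k := by omega
        have := congrArg (fun n : ℕ => ((n : ZMod p))) h'
        push_cast at this
        linear_combination this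
      have e2 : ((k - 1 : ℕ) : ZMod p) = (k : ZMod p) - 1 := by
        have h' : (k - 1) + 1 = k := by omega
        have := congrArg (fun n : ℕ => ((n : ZMod p))) h'
        push_cast at this
        linear_combination this
      have h1' : (((2 * k).choose (2 * 1) : ℕ) : ZMod p) = 1 := h1
      norm_num at h1'
      have h2z : (2 : ZMod p) ≠ 0 := by
        intro h
        have : ((2 : ℕ) : ZMod p) = 0 := by exact_mod_cast h
        have := (ZMod.natCast_eq_zero_iff _ _).mp this
        have := Nat.le_of_dvd (by omega) this
        omega
      refine mul_left_cancel₀ h2z ?_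
      push_cast [e1, e2]
      rw [mul_zero]
      push_cast [e1, e2] at hcast
      rw [h1'] at hcast
      linear_combination -hcast
    have hdvd : p ∣ (2 * k + 1) * (k - 1) :=
      (ZMod.natCast_eq_zero_iff _ _).mp hz
    rcases (Nat.Prime.dvd_mul hp).mp hdvd with h | h
    · have : p = 2 * k + 1 := le_antisymm (Nat.le_of_dvd (by omega) h) (by omega)
      exact ⟨1, by omega, by rw [pow_one]; omega⟩
    · exfalso
      have := Nat.le_of_dvd (by omega) h
      omega
  · push_neg at hbig
    have hqd : p * (2 * k / p) + 2 * k % p = 2 * k := Nat.div_add_mod _ _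
    have hrp : 2 * k % p < p := Nat.mod_lt _ (by omega)
    have hi0 : 2 * ((p - 1) / 2) = p - 1 := by omega
    -- step 1 : 2k % p = p - 1
    have hrval : 2 * k % p = p - 1 := by
      by_contra hne
      have h2 := H ((p - 1) / 2) (by omega) (by omega)
      rw [hi0] at h2
      rw [lucas_step p (2 * k) (p - 1)] at h2
      rw [Nat.mod_eq_of_lt (show p - 1 < p by omega),
        Nat.div_eq_of_lt (show p - 1 < p by omega)] at h2
      rw [Nat.choose_eq_zero_of_lt (show 2 * k % p < p - 1 by omega)] at h2
      simp at h2
    -- step 2 : condition descends to 2k / p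
    have H' : ∀ v ≤ 2 * k / p, (((2 * k / p).choose v : ℕ) : ZMod p) = (-1) ^ v := by
      intro v hv
      rcases Nat.eq_zero_or_pos v with rfl | hv1
      · simp
      have hmod2 : (p * v) % 2 = v % 2 := by
        rw [Nat.mul_mod, hp2, one_mul, Nat.mod_mod_of_dvd _ (dvd_refl 2)]
      have hple : p * v ≤ p * (2 * k / p) := Nat.mul_le_mul_left p hv
      have hpv : p ≤ p * v := Nat.le_mul_of_pos_right p hv1
      have hmub : v % 2 + p * v ≤ 2 * k := by omega
      have hmlb : 2 ≤ v % 2 + p * v := by omega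
      have him : 2 * ((v % 2 + p * v) / 2) = v % 2 + p * v := by omega
      have h3 := H ((v % 2 + p * v) / 2) (by omega) (by omega)
      rw [him] at h3
      rw [lucas_step p (2 * k) (v % 2 + p * v)] at h3
      have hmmod : (v % 2 + p * v) % p = v % 2 := by
        rw [Nat.add_mul_mod_self_left]
        exact Nat.mod_eq_of_lt (by omega)
      have hmdiv : (v % 2 + p * v) / p = v := by
        rw [Nat.add_mul_div_left _ _ (show 0 < p by omega),
          Nat.div_eq_of_lt (by omega), zero_add]
      rw [hmmod, hmdiv, hrval] at h3
      have hL1 : (((p - 1).choose (v % 2) : ℕ) : ZMod p) = (-1) ^ (v % 2) := by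
        have h' := choose_pp_sub_one p 1 (v % 2) (by rw [pow_one]; omega)
        rw [pow_one] at h'
        exact h'
      rw [hL1] at h3
      have hvp : ((-1 : ZMod p)) ^ v = (-1) ^ (v % 2) := by
        conv_lhs => rw [← Nat.div_add_mod v 2, pow_add, pow_mul]
        norm_num
      rw [hvp]
      rcases Nat.mod_two_eq_zero_or_one v with h | h <;> rw [h] at h3 ⊢
      · rw [pow_zero] at h3 ⊢; linear_combination h3
      · rw [pow_one] at h3 ⊢; linear_combination -h3
    obtain ⟨t, ht⟩ := pow_of_all_choose_sign p (2 * k / p) H'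
    have hmul : p * (2 * k / p + 1) = p * (2 * k / p) + p := by ring
    refine ⟨t + 1, by omega, ?_⟩
    have he : 2 * k + 1 = p * (2 * k / p + 1) := by omega
    rw [he, ht, pow_succ']

-- L5 : 2 dividing all C(2k,2i)-1 forces 2k+2 = 2^s
lemma two_cond (k : ℕ) (hk : 2 ≤ k)
    (H : ∀ i, 1 ≤ i → i ≤ k → (((2 * k).choose (2 * i) : ℕ) : ZMod 2) = 1) :
    ∃ s : ℕ, 0 < s ∧ 2 * k + 2 = 2 ^ s := by
  haveI : Fact (Nat.Prime 2) := ⟨Nat.prime_two⟩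
  have H' : ∀ v ≤ k, ((k.choose v : ℕ) : ZMod 2) = (-1) ^ v := by
    intro v hv
    have hneg : ((-1 : ZMod 2)) ^ v = 1 := by
      have h1 : (-1 : ZMod 2) = 1 := rfl
      rw [h1, one_pow]
    rw [hneg]
    rcases Nat.eq_zero_or_pos v with rfl | hv1
    · simp
    have h3 := H v hv1 hv
    rw [lucas_step 2 (2 * k) (2 * v)] at h3
    rw [Nat.mul_mod_right, Nat.mul_mod_right,
      Nat.mul_div_cancel_left _ two_pos, Nat.mul_div_cancel_left _ two_pos] at h3
    simpa using h3
  obtain ⟨t, ht⟩ := pow_of_all_choose_sign 2 k H'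
  refine ⟨t + 1, by omega, ?_⟩
  have h2 : 2 * k + 2 = 2 * (k + 1) := by ring
  rw [h2, ht, pow_succ']

-- lower bound, odd prime power case
lemma cond_of_odd_pow (p s k : ℕ) (hp : p.Prime) (hs : 0 < s) (hpk : 2 * k + 1 = p ^ s)
    (i : ℕ) (hik : i ≤ k) : (((2 * k).choose (2 * i) : ℕ) : ZMod p) = 1 := by
  haveI : Fact p.Prime := ⟨hp⟩
  have h2k : 2 * k = p ^ s - 1 := by omega
  rw [h2k, choose_pp_sub_one p s (2 * i) (by omega), pow_mul]
  norm_num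

-- lower bound, 2-power case
lemma cond_of_two_pow (s k : ℕ) (hs : 0 < s) (hpk : 2 * k + 2 = 2 ^ s) (hk : 1 ≤ k)
    (i : ℕ) (hik : i ≤ k) : (((2 * k).choose (2 * i) : ℕ) : ZMod 2) = 1 := by
  haveI : Fact (Nat.Prime 2) := ⟨Nat.prime_two⟩
  have hs2 : 2 ≤ s := by
    rcases (by omega : s = 1 ∨ 2 ≤ s) with h | h
    · rw [h, pow_one] at hpk; omega
    · exact h
  have hps : 2 ^ s = 2 * 2 ^ (s - 1) := by
    rw [← pow_succ']
    congr 1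
    omega
  have hk1 : k = 2 ^ (s - 1) - 1 := by omega
  rw [lucas_step 2 (2 * k) (2 * i), Nat.mul_mod_right, Nat.mul_mod_right,
    Nat.mul_div_cancel_left _ two_pos, Nat.mul_div_cancel_left _ two_pos]
  have h2just : 1 ≤ 2 ^ (s - 1) := Nat.one_le_two_pow
  rw [hk1, choose_pp_sub_one 2 (s - 1) i (by omega)]
  have h1 : (-1 : ZMod 2) = 1 := rfl
  rw [h1, one_pow]
  simp

-- ZMod / dvd conversions
lemma zmod_one_of_dvd (q C : ℕ) (hC : 1 ≤ C) (h : q ∣ C - 1) : ((C : ℕ) : ZMod q) = 1 := by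
  have h2 : ((C : ℕ) : ZMod q) = ((1 : ℕ) : ZMod q) :=
    (ZMod.natCast_eq_natCast_iff _ _ _).mpr ((Nat.modEq_iff_dvd' hC).mpr h).symm
  simpa using h2

lemma dvd_of_zmod_one (q C : ℕ) (hC : 1 ≤ C) (h : ((C : ℕ) : ZMod q) = 1) : q ∣ C - 1 := by
  have h2 : ((C : ℕ) : ZMod q) = ((1 : ℕ) : ZMod q) := by simpa using h
  exact (Nat.modEq_iff_dvd' hC).mp ((ZMod.natCast_eq_natCast_iff _ _ _).mp h2).symm

-- the choose(2k,2)-1 identity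
lemma choose_two_sub_one (k : ℕ) (hk : 2 ≤ k) :
    (2 * k).choose 2 - 1 = (2 * k + 1) * (k - 1) := by
  have hC2 : 2 * ((2 * k).choose 2) = 2 * k * (2 * k - 1) := by
    rw [Nat.choose_two_right, Nat.mul_div_cancel']
    exact Dvd.dvd.mul_right ⟨k, rfl⟩ _
  have e1 : k - 1 + 1 = k := by omega
  have e2 : 2 * k - 1 + 1 = 2 * k := by omega
  have key : 2 * ((2 * k + 1) * (k - 1)) + 2 = 2 * k * (2 * k - 1) := by
    have expand : 2 * ((2 * k + 1) * (k - 1)) + 2 =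
        2 * ((2 * (k - 1 + 1) + 1) * (k - 1)) + 2 := by rw [e1]
    rw [expand]
    have expand2 : 2 * k * (2 * k - 1) = 2 * (k - 1 + 1) * (2 * (k - 1 + 1) - 1) := by rw [e1]
    rw [expand2]
    have e3 : 2 * (k - 1 + 1) - 1 = 2 * (k - 1) + 1 := by omega
    rw [e3]
    ring
  omega

-- witness against 4 ∣ gcd in the 2-power case
lemma witness_two (s k : ℕ) (hk : 2 ≤ k) (hpk : 2 * k + 2 = 2 ^ s) :
    ¬ (2 ^ 2 ∣ (2 * k).choose 2 - 1) := by
  intro hdvd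
  rw [choose_two_sub_one k hk] at hdvd
  have hodd : Odd (2 * k + 1) := ⟨k, by omega⟩
  have hcop : Nat.Coprime (2 ^ 2) (2 * k + 1) :=
    Nat.Coprime.pow_left 2 (Nat.coprime_two_left.mpr hodd)
  have h4 : 2 ^ 2 ∣ (k - 1) * (2 * k + 1) := by rwa [mul_comm] at hdvd
  have hdk : 2 ^ 2 ∣ k - 1 := hcop.dvd_of_dvd_mul_right h4
  have hs3 : 3 ≤ s := by
    rcases (by omega : s = 0 ∨ s = 1 ∨ s = 2 ∨ 3 ≤ s) with h | h | h | h
    · rw [h] at hpk; norm_num at hpk; omega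
    · rw [h] at hpk; norm_num at hpk; omega
    · rw [h] at hpk; norm_num at hpk; omega
    · exact h
  have e1 : 2 ^ s = 2 * 2 ^ (s - 1) := by rw [← pow_succ']; congr 1; omega
  have e2 : 2 ^ (s - 1) = 2 * 2 ^ (s - 2) := by rw [← pow_succ']; congr 1; omega
  have e3 : 2 ^ (s - 2) = 2 * 2 ^ (s - 3) := by rw [← pow_succ']; congr 1; omega
  have h1 : 1 ≤ 2 ^ (s - 3) := Nat.one_le_two_pow
  omega

-- witness against p^2 ∣ gcd in the odd prime power case
lemma witness_odd (p s k : ℕ) (hp : p.Prime) (hodd : p ≠ 2) (hs : 0 < s)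
    (hpk : 2 * k + 1 = p ^ s) (hk : 2 ≤ k) :
    ∃ i, 1 ≤ i ∧ i ≤ k ∧ ¬ (p ^ 2 ∣ (2 * k).choose (2 * i) - 1) := by
  haveI : Fact p.Prime := ⟨hp⟩
  have hp1 : 1 < p := hp.one_lt
  have hp3 : 3 ≤ p := by
    rcases Nat.lt_or_ge p 3 with h | h
    · interval_cases p <;> simp_all
    · exact h
  rcases Nat.lt_or_ge s 2 with hs1 | hs2
  · -- s = 1
    have hs1' : s = 1 := by omega
    rw [hs1', pow_one] at hpk
    refine ⟨1, le_refl 1, by omega, ?_⟩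
    intro hdvd
    rw [mul_one, choose_two_sub_one k hk, hpk] at hdvd
    have hpp : p * p ∣ p * (k - 1) := by
      rw [← pow_two]
      exact hdvd
    have hdk : p ∣ k - 1 := (mul_dvd_mul_iff_left (by omega : p ≠ 0)).mp hpp
    have := Nat.le_of_dvd (by omega) hdk
    omega
  · -- s ≥ 2
    have hppos : 0 < p ^ s := pow_pos (by omega) s
    have hP1 : p ≤ p ^ (s - 1) := Nat.le_self_pow (by omega) p
    have hPodd : p ^ (s - 1) % 2 = 1 := Nat.odd_iff.mp ((hp.odd_of_ne_two hodd).pow)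
    have hpows : p ^ s = p * p ^ (s - 1) := by rw [← pow_succ']; congr 1; omega
    have h3P : 3 * p ^ (s - 1) ≤ p * p ^ (s - 1) := Nat.mul_le_mul_right _ hp3
    -- c1 : small binomials mod p^2
    have c1 : ∀ j, j ≤ p ^ (s - 1) - 1 →
        (((p ^ s - 1).choose j : ℕ) : ZMod (p ^ 2)) = (-1) ^ j := by
      intro j
      induction j with
      | zero => intro _; simp
      | succ j ih =>
        intro hj
        have hj' : j ≤ p ^ (s - 1) - 1 := by omega
        have hkn : j + 1 ≤ p ^ s := by omega
        have hmulte := Nat.Prime.emultiplicity_choose_prime_pow hp hkn (Nat.succ_ne_zero j)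
        have hmle : multiplicity p (j + 1) ≤ s - 2 := by
          by_contra hgt
          push_neg at hgt
          have hdd : p ^ (s - 1) ∣ j + 1 :=
            dvd_trans (pow_dvd_pow p (by omega)) (pow_multiplicity_dvd p (j + 1))
          have := Nat.le_of_dvd (by omega) hdd
          omega
        have hdvd2 : p ^ 2 ∣ (p ^ s).choose (j + 1) := by
          apply pow_dvd_of_le_emultiplicity
          rw [hmulte]
          exact_mod_cast (by omega : 2 ≤ s - multiplicity p (j + 1))
        have hz : (((p ^ s).choose (j + 1) : ℕ) : ZMod (p ^ 2)) = 0 :=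
          (ZMod.natCast_eq_zero_iff _ _).mpr hdvd2
        have hps' : p ^ s - 1 + 1 = p ^ s := by omega
        have hpas : (p ^ s).choose (j + 1)
            = (p ^ s - 1).choose j + (p ^ s - 1).choose (j + 1) := by
          rw [← hps']; exact Nat.choose_succ_succ _ j
        have key : (((p ^ s - 1).choose j : ℕ) : ZMod (p ^ 2))
            + (((p ^ s - 1).choose (j + 1) : ℕ) : ZMod (p ^ 2)) = 0 := by
          rw [← Nat.cast_add, ← hpas, hz]
        rw [ih hj'] at key
        have := eq_neg_of_add_eq_zero_right key
        rw [this, pow_succ]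
        ring
    -- B = choose (p^s - 1) (p^(s-1) - 1) ≡ 1 mod p^2
    have hBeven : 2 * ((p ^ (s - 1) - 1) / 2) = p ^ (s - 1) - 1 := by omega
    have hB : (((p ^ s - 1).choose (p ^ (s - 1) - 1) : ℕ) : ZMod (p ^ 2)) = 1 := by
      rw [c1 (p ^ (s - 1) - 1) (le_refl _), ← hBeven, pow_mul]
      norm_num
    -- C = choose (p^s) (p^(s-1)) = p * B
    have hCB : (p ^ s).choose (p ^ (s - 1))
        = p * ((p ^ s - 1).choose (p ^ (s - 1) - 1)) := by
      have hid := Nat.add_one_mul_choose_eq (p ^ s - 1) (p ^ (s - 1) - 1)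
      have e1 : p ^ s - 1 + 1 = p ^ s := by omega
      have e2 : p ^ (s - 1) - 1 + 1 = p ^ (s - 1) := by omega
      rw [e1, e2] at hid
      -- hid : p ^ s * choose (p^s - 1) (p^(s-1) - 1) = choose (p^s) (p^(s-1)) * p^(s-1)
      have h2 : (p ^ s).choose (p ^ (s - 1)) * p ^ (s - 1)
          = p * (p ^ s - 1).choose (p ^ (s - 1) - 1) * p ^ (s - 1) := by
        rw [← hid, hpows]; ring
      exact Nat.eq_of_mul_eq_mul_right (by positivity) h2
    -- D ≡ p - 1, E ≡ 1 - p  mod p^2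
    have hps' : p ^ s - 1 + 1 = p ^ s := by omega
    have hpasD : (p ^ s).choose (p ^ (s - 1))
        = (p ^ s - 1).choose (p ^ (s - 1) - 1) + (p ^ s - 1).choose (p ^ (s - 1)) := by
      have e2 : p ^ (s - 1) - 1 + 1 = p ^ (s - 1) := by omega
      rw [← hps', ← e2]
      exact Nat.choose_succ_succ _ _
    have hD : (((p ^ s - 1).choose (p ^ (s - 1)) : ℕ) : ZMod (p ^ 2)) = (p : ZMod (p ^ 2)) - 1 := by
      have := congrArg (fun n : ℕ => ((n : ZMod (p ^ 2)))) hpasD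
      push_cast at this
      rw [hB] at this
      rw [congrArg (fun n : ℕ => ((n : ZMod (p ^ 2)))) hCB] at this
      push_cast at this
      rw [hB] at this
      linear_combination -this
    -- p^2 divides choose (p^s) (p^(s-1)+1)
    have hnd : ¬ p ∣ p ^ (s - 1) + 1 := by
      intro hd
      have : p ∣ p ^ (s - 1) := dvd_pow_self p (by omega)
      have h1 : p ∣ 1 := (Nat.dvd_add_right this).mp hd
      have := Nat.le_of_dvd one_pos h1
      omega
    have hmult0 : multiplicity p (p ^ (s - 1) + 1) = 0 :=
      multiplicity_eq_zero.mpr hnd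
    have hE0 : p ^ 2 ∣ (p ^ s).choose (p ^ (s - 1) + 1) := by
      apply pow_dvd_of_le_emultiplicity
      rw [Nat.Prime.emultiplicity_choose_prime_pow hp (by omega) (by omega), hmult0]
      exact_mod_cast (by omega : 2 ≤ s - 0)
    have hpasE : (p ^ s).choose (p ^ (s - 1) + 1)
        = (p ^ s - 1).choose (p ^ (s - 1)) + (p ^ s - 1).choose (p ^ (s - 1) + 1) := by
      rw [← hps']
      exact Nat.choose_succ_succ _ _
    have hE : (((p ^ s - 1).choose (p ^ (s - 1) + 1) : ℕ) : ZMod (p ^ 2))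
        = 1 - (p : ZMod (p ^ 2)) := by
      have hzE : (((p ^ s).choose (p ^ (s - 1) + 1) : ℕ) : ZMod (p ^ 2)) = 0 :=
        (ZMod.natCast_eq_zero_iff _ _).mpr hE0
      have := congrArg (fun n : ℕ => ((n : ZMod (p ^ 2)))) hpasE
      push_cast at this
      rw [hzE, hD] at this
      linear_combination -this
    -- assemble the witness
    refine ⟨(p ^ (s - 1) + 1) / 2, by omega, by omega, ?_⟩
    intro hdvd
    have h2i : 2 * ((p ^ (s - 1) + 1) / 2) = p ^ (s - 1) + 1 := by omega
    rw [h2i] at hdvd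
    have h2k : 2 * k = p ^ s - 1 := by omega
    rw [h2k] at hdvd
    have hcpos : 1 ≤ (p ^ s - 1).choose (p ^ (s - 1) + 1) :=
      Nat.choose_pos (by omega)
    have := zmod_one_of_dvd (p ^ 2) _ hcpos hdvd
    rw [hE] at this
    have hpz : ((p : ℕ) : ZMod (p ^ 2)) = 0 := by
      have : (1 : ZMod (p ^ 2)) - (p : ZMod (p ^ 2)) = 1 := this
      linear_combination -this
    have := (ZMod.natCast_eq_zero_iff _ _).mp hpz
    have := Nat.le_of_dvd (by omega) this
    have hle : p ^ 2 ≤ p := this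
    have hgt : p < p ^ 2 := by
      have h := Nat.pow_lt_pow_right hp1 (by omega : 1 < 2)
      rwa [pow_one] at h
    omega

open Classical in
/-- `mCF i = p` if `i + 1 = p ^ s` for some prime `p` and `s > 0`, and `1` otherwise. -/
noncomputable def mCF (i : ℕ) : ℕ :=
  if h : ∃ p : ℕ, p.Prime ∧ ∃ s : ℕ, 0 < s ∧ i + 1 = p ^ s then h.choose else 1


lemma mCF_spec {i p s : ℕ} (hp : p.Prime) (hs : 0 < s) (h : i + 1 = p ^ s) : mCF i = p := by
  have hex : ∃ q : ℕ, q.Prime ∧ ∃ t : ℕ, 0 < t ∧ i + 1 = q ^ t := ⟨p, hp, s, hs, h⟩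
  rw [mCF, dif_pos hex]
  obtain ⟨hq, t, ht, hqt⟩ := hex.choose_spec
  have hdvd : p ∣ hex.choose ^ t := by
    rw [← hqt, h]
    exact dvd_pow_self p hs.ne'
  have hpq : p ∣ hex.choose := Nat.Prime.dvd_of_dvd_pow hp hdvd
  exact ((Nat.prime_dvd_prime_iff_eq hp hq).mp hpq).symm

lemma mCF_eq_one {i : ℕ} (h : ¬ ∃ p : ℕ, p.Prime ∧ ∃ s : ℕ, 0 < s ∧ i + 1 = p ^ s) :
    mCF i = 1 := by
  rw [mCF, dif_neg h]

lemma mCF_pos (i : ℕ) : 0 < mCF i := by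
  rw [mCF]
  split
  · next h => exact h.choose_spec.1.pos
  · exact one_pos

lemma mCF_two_cases (k : ℕ) :
    mCF (2 * k + 1) = 1 ∨ (mCF (2 * k + 1) = 2 ∧ ∃ s, 0 < s ∧ 2 * k + 2 = 2 ^ s) := by
  by_cases h : ∃ p : ℕ, p.Prime ∧ ∃ s : ℕ, 0 < s ∧ (2 * k + 1) + 1 = p ^ s
  · obtain ⟨p, hp, s, hs, hps⟩ := h
    have h2 : 2 ∣ p ^ s := by
      rw [← hps]
      exact ⟨k + 1, by ring⟩
    have hp2 : p = 2 :=
      ((Nat.prime_dvd_prime_iff_eq Nat.prime_two hp).mp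
        (Nat.Prime.dvd_of_dvd_pow Nat.prime_two h2)).symm
    subst hp2
    exact Or.inr ⟨mCF_spec hp hs hps, s, hs, by omega⟩
  · exact Or.inl (mCF_eq_one h)

lemma mCF_odd_cases (k : ℕ) :
    mCF (2 * k) = 1 ∨ (∃ p s, p.Prime ∧ p ≠ 2 ∧ 0 < s ∧ 2 * k + 1 = p ^ s ∧ mCF (2 * k) = p) := by
  by_cases h : ∃ p : ℕ, p.Prime ∧ ∃ s : ℕ, 0 < s ∧ 2 * k + 1 = p ^ s
  · obtain ⟨p, hp, s, hs, hps⟩ := h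
    have hp2 : p ≠ 2 := by
      intro hp2
      subst hp2
      have h2 : 2 ∣ 2 ^ s := dvd_pow_self 2 hs.ne'
      rw [← hps] at h2
      omega
    exact Or.inr ⟨p, s, hp, hp2, hs, hps, mCF_spec hp hs hps⟩
  · exact Or.inl (mCF_eq_one h)

-- mCF (2k) is odd
lemma mCF_odd_odd (k : ℕ) : mCF (2 * k) % 2 = 1 := by
  rcases mCF_odd_cases k with h | ⟨p, s, hp, hp2, _, _, hm⟩
  · rw [h]
  · rw [hm]
    exact Nat.odd_iff.mp (hp.odd_of_ne_two hp2)

theorem gcd_binom_diff (k : ℕ) (hk : 1 < k) :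
    Finset.gcd (Finset.Icc 1 k)
      (fun i => ((2 * k + 1).choose (2 * i) : ℤ) - ((2 * k + 1).choose (2 * i - 1) : ℤ))
      = ((mCF (2 * k + 1) * mCF (2 * k) : ℕ) : ℤ) := by
  have hk2 : 2 ≤ k := hk
  set A : ℕ → ℤ := fun i =>
    ((2 * k + 1).choose (2 * i) : ℤ) - ((2 * k + 1).choose (2 * i - 1) : ℤ) with hA
  set F : ℕ → ℤ := fun i => ((2 * k).choose (2 * i) : ℤ) - 1 with hF
  have hF0 : F 0 = 0 := by simp [hF]
  have key : ∀ j : ℕ, A (j + 1) = F (j + 1) - F j := by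
    intro j
    have p1 : (2 * k + 1).choose (2 * j + 1 + 1)
        = (2 * k).choose (2 * j + 1) + (2 * k).choose (2 * j + 1 + 1) :=
      Nat.choose_succ_succ' (2 * k) (2 * j + 1)
    have p2 : (2 * k + 1).choose (2 * j + 1)
        = (2 * k).choose (2 * j) + (2 * k).choose (2 * j + 1) :=
      Nat.choose_succ_succ' (2 * k) (2 * j)
    simp only [hA, hF]
    rw [show 2 * (j + 1) - 1 = 2 * j + 1 from by omega]
    rw [show 2 * (j + 1) = 2 * j + 1 + 1 from by ring]
    rw [p1, p2]
    push_cast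
    ring
  have hmem : ∀ i, 1 ≤ i → i ≤ k → i ∈ Finset.Icc 1 k := by
    intro i h1 h2
    simp only [Finset.mem_Icc]
    omega
  have hgcd : Finset.gcd (Finset.Icc 1 k) A = Finset.gcd (Finset.Icc 1 k) F := by
    apply dvd_antisymm_of_normalize_eq Finset.normalize_gcd Finset.normalize_gcd
    · apply Finset.dvd_gcd
      intro i hi
      simp only [Finset.mem_Icc] at hi
      have step : ∀ m, m ≤ k → Finset.gcd (Finset.Icc 1 k) A ∣ F m := by
        intro m
        induction m with
        | zero => intro _; rw [hF0]; exact dvd_zero _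
        | succ m ih =>
          intro hm
          have h1 : Finset.gcd (Finset.Icc 1 k) A ∣ A (m + 1) :=
            Finset.gcd_dvd (hmem (m + 1) (by omega) hm)
          have h2 := dvd_add (ih (by omega)) h1
          have e : F m + A (m + 1) = F (m + 1) := by rw [key m]; ring
          rwa [e] at h2
      exact step i hi.2
    · apply Finset.dvd_gcd
      intro i hi
      simp only [Finset.mem_Icc] at hi
      obtain ⟨j, rfl⟩ : ∃ j, i = j + 1 := ⟨i - 1, by omega⟩
      rw [key j]
      apply dvd_sub
      · exact Finset.gcd_dvd (hmem (j + 1) (by omega) (by omega))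
      · rcases Nat.eq_zero_or_pos j with rfl | hj
        · rw [hF0]; exact dvd_zero _
        · exact Finset.gcd_dvd (hmem j (by omega) (by omega))
  rw [hgcd]
  -- now : gcd of F equals mCF product
  have hFnat : ∀ i, i ≤ k → F i = (((2 * k).choose (2 * i) - 1 : ℕ) : ℤ) := by
    intro i hi
    have hpos : 1 ≤ (2 * k).choose (2 * i) := Nat.choose_pos (by omega)
    simp only [hF]
    rw [Nat.cast_sub hpos]
    push_cast
    ring
  have hGnonneg : 0 ≤ Finset.gcd (Finset.Icc 1 k) F := by
    have hn : normalize (Finset.gcd (Finset.Icc 1 k) F) = Finset.gcd (Finset.Icc 1 k) F :=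
      Finset.normalize_gcd
    exact Int.nonneg_of_normalize_eq_self hn
  have hGdvdN : ∀ i, 1 ≤ i → i ≤ k →
      (Finset.gcd (Finset.Icc 1 k) F).natAbs ∣ (2 * k).choose (2 * i) - 1 := by
    intro i h1 h2
    have hd := Finset.gcd_dvd (f := F) (hmem i h1 h2)
    rw [hFnat i h2] at hd
    have h3 := Int.natAbs_dvd_natAbs.mpr hd
    simpa using h3
  have ha : ∀ i, 1 ≤ i → i ≤ k → mCF (2 * k + 1) ∣ (2 * k).choose (2 * i) - 1 := by
    intro i h1 h2
    rcases mCF_two_cases k with h | ⟨hm, s, hs, hps⟩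
    · rw [h]; exact one_dvd _
    · rw [hm]
      exact dvd_of_zmod_one 2 _ (Nat.choose_pos (by omega))
        (cond_of_two_pow s k hs hps (by omega) i h2)
  have hb : ∀ i, 1 ≤ i → i ≤ k → mCF (2 * k) ∣ (2 * k).choose (2 * i) - 1 := by
    intro i h1 h2
    rcases mCF_odd_cases k with h | ⟨p, s, hp, hp2, hs, hps, hm⟩
    · rw [h]; exact one_dvd _
    · rw [hm]
      exact dvd_of_zmod_one p _ (Nat.choose_pos (by omega))
        (cond_of_odd_pow p s k hp hs hps i h2)
  have hcop : Nat.Coprime (mCF (2 * k + 1)) (mCF (2 * k)) := by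
    rcases mCF_two_cases k with h | ⟨hm, _⟩
    · rw [h]; exact Nat.coprime_one_left _
    · rw [hm]
      exact Nat.coprime_two_left.mpr (Nat.odd_iff.mpr (mCF_odd_odd k))
  have hMdvdG : ((mCF (2 * k + 1) * mCF (2 * k) : ℕ) : ℤ) ∣ Finset.gcd (Finset.Icc 1 k) F := by
    apply Finset.dvd_gcd
    intro i hi
    simp only [Finset.mem_Icc] at hi
    rw [hFnat i hi.2]
    exact Int.natCast_dvd_natCast.mpr
      (hcop.mul_dvd_of_dvd_of_dvd (ha i hi.1 hi.2) (hb i hi.1 hi.2))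
  have hGne : Finset.gcd (Finset.Icc 1 k) F ≠ 0 := by
    intro h0
    have hd := Finset.gcd_dvd (f := F) (hmem 1 le_rfl (by omega))
    rw [h0] at hd
    have hF10 : F 1 = 0 := zero_dvd_iff.mp hd
    rw [hFnat 1 (by omega)] at hF10
    have heq : (2 * k).choose (2 * 1) - 1 = 0 := by exact_mod_cast hF10
    rw [mul_one, choose_two_sub_one k hk2] at heq
    rcases Nat.mul_eq_zero.mp heq with h | h <;> omega
  have hNdvdM : (Finset.gcd (Finset.Icc 1 k) F).natAbs ∣ mCF (2 * k + 1) * mCF (2 * k) := by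
    have hN0 : (Finset.gcd (Finset.Icc 1 k) F).natAbs ≠ 0 := by
      intro h
      exact hGne (by simpa [Int.natAbs_eq_zero] using h)
    have hM0 : mCF (2 * k + 1) * mCF (2 * k) ≠ 0 :=
      Nat.mul_ne_zero (mCF_pos _).ne' (mCF_pos _).ne'
    rw [← Nat.factorization_le_iff_dvd hN0 hM0, Finsupp.le_def]
    intro p
    by_cases hp : p.Prime
    case neg => simp [Nat.factorization_eq_zero_of_not_prime _ hp]
    by_cases hpd : p ∣ (Finset.gcd (Finset.Icc 1 k) F).natAbs
    case neg => rw [Nat.factorization_eq_zero_of_not_dvd hpd]; exact Nat.zero_le _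
    have hcond : ∀ i, 1 ≤ i → i ≤ k → (((2 * k).choose (2 * i) : ℕ) : ZMod p) = 1 := by
      intro i h1 h2
      exact zmod_one_of_dvd p _ (Nat.choose_pos (by omega))
        (dvd_trans hpd (hGdvdN i h1 h2))
    by_cases hp2 : p = 2
    · subst hp2
      obtain ⟨s, hs, hps⟩ := two_cond k hk2 hcond
      have hm2 : mCF (2 * k + 1) = 2 := mCF_spec Nat.prime_two hs (by omega)
      have hdvdM : 2 ∣ mCF (2 * k + 1) * mCF (2 * k) := ⟨mCF (2 * k), by rw [hm2]⟩
      have hMfact : 1 ≤ (mCF (2 * k + 1) * mCF (2 * k)).factorization 2 :=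
        Nat.Prime.factorization_pos_of_dvd Nat.prime_two hM0 hdvdM
      have hNfact : (Finset.gcd (Finset.Icc 1 k) F).natAbs.factorization 2 ≤ 1 := by
        by_contra hgt
        push_neg at hgt
        have hdd : 2 ^ 2 ∣ (Finset.gcd (Finset.Icc 1 k) F).natAbs :=
          (Nat.Prime.pow_dvd_iff_le_factorization Nat.prime_two hN0).mpr hgt
        have h4 : 2 ^ 2 ∣ (2 * k).choose 2 - 1 := by
          have hh := hGdvdN 1 le_rfl (by omega)
          norm_num at hh
          exact dvd_trans hdd hh
        exact witness_two s k hk2 hps h4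
      omega
    · obtain ⟨s, hs, hps⟩ := odd_prime_cond p k hp hp2 hk2 hcond
      have hmp : mCF (2 * k) = p := mCF_spec hp hs hps
      have hdvdM : p ∣ mCF (2 * k + 1) * mCF (2 * k) :=
        Dvd.dvd.mul_left (dvd_of_eq hmp.symm) _
      have hMfact : 1 ≤ (mCF (2 * k + 1) * mCF (2 * k)).factorization p :=
        Nat.Prime.factorization_pos_of_dvd hp hM0 hdvdM
      obtain ⟨i0, hi1, hi2, hwit⟩ := witness_odd p s k hp hp2 hs hps hk2
      have hNfact : (Finset.gcd (Finset.Icc 1 k) F).natAbs.factorization p ≤ 1 := by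
        by_contra hgt
        push_neg at hgt
        have hdd : p ^ 2 ∣ (Finset.gcd (Finset.Icc 1 k) F).natAbs :=
          (Nat.Prime.pow_dvd_iff_le_factorization hp hN0).mpr hgt
        exact hwit (dvd_trans hdd (hGdvdN i0 hi1 hi2))
      omega
  have hGdvdM : Finset.gcd (Finset.Icc 1 k) F ∣ ((mCF (2 * k + 1) * mCF (2 * k) : ℕ) : ℤ) := by
    have hh := Int.natCast_dvd_natCast.mpr hNdvdM
    rwa [Int.natAbs_of_nonneg hGnonneg] at hh
  exact Int.dvd_antisymm hGnonneg (Int.natCast_nonneg _) hGdvdM hMdvdG
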